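/- arXiv:math/9801142 — 2 statements merged into one kernel-verified Lean document; each statement's English description precedes it below -/
import Mathlib

section
/- There do not exist C⁵ functions f, g defined in a neighborhood of the origin in ℝ² satisfying λ = (fλ)_x + (gλ)_y identically, where λ(x,y) = x⁶ + y⁶ + x²y². -/
noncomputable def lam : ℝ × ℝ → ℝ := fun p => p.1 ^ 6 + p.2 ^ 6 + p.1 ^ 2 * p.2 ^ 2

open Filter Topology

noncomputable def lamD (p : ℝ × ℝ) : ℝ × ℝ →L[ℝ] ℝ :=
  (6*p.1^5 + 2*p.1*p.2^2) • ContinuousLinearMap.fst ℝ ℝ ℝ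
    + (6*p.2^5 + 2*p.1^2*p.2) • ContinuousLinearMap.snd ℝ ℝ ℝ

lemma lam_hasFDerivAt (p : ℝ × ℝ) : HasFDerivAt lam (lamD p) p := by
  have h1 : HasFDerivAt (fun q : ℝ×ℝ => q.1) (ContinuousLinearMap.fst ℝ ℝ ℝ) p := hasFDerivAt_fst
  have h2 : HasFDerivAt (fun q : ℝ×ℝ => q.2) (ContinuousLinearMap.snd ℝ ℝ ℝ) p := hasFDerivAt_snd
  have h16 := h1.mul (h1.mul (h1.mul (h1.mul (h1.mul h1))))
  have h26 := h2.mul (h2.mul (h2.mul (h2.mul (h2.mul h2))))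
  have h12 := (h1.mul h1).mul (h2.mul h2)
  have H := (h16.add h26).add h12
  have heqn : lam = fun q : ℝ×ℝ => q.1*(q.1*(q.1*(q.1*(q.1*q.1)))) + q.2*(q.2*(q.2*(q.2*(q.2*q.2))))
      + (q.1*q.1)*(q.2*q.2) := by
    funext q; simp only [lam]; ring
  rw [heqn]
  refine H.congr_fderiv ?_
  ext <;> simp [lamD] <;> ring

lemma lamD_apply (p v : ℝ × ℝ) :
    lamD p v = (6*p.1^5 + 2*p.1*p.2^2) * v.1 + (6*p.2^5 + 2*p.1^2*p.2) * v.2 := by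
  simp [lamD]

lemma slope_tendsto (f : ℝ × ℝ → ℝ) (D : ℝ × ℝ →L[ℝ] ℝ) (hf : HasFDerivAt f D 0)
    (h0 : f 0 = 0) (u v : ℝ) :
    Tendsto (fun t : ℝ => f (t*u, t*v) / t) (𝓝[≠] 0) (𝓝 (D (u, v))) := by
  have hc : HasDerivAt (fun t : ℝ => ((t*u, t*v) : ℝ × ℝ)) (u, v) 0 := by
    have h1 : HasDerivAt (fun t : ℝ => t*u) u 0 := by
      simpa using (hasDerivAt_id (0:ℝ)).mul_const u
    have h2 : HasDerivAt (fun t : ℝ => t*v) v 0 := by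
      simpa using (hasDerivAt_id (0:ℝ)).mul_const v
    exact h1.prodMk h2
  have hf' : HasFDerivAt f D ((fun t : ℝ => ((t*u, t*v) : ℝ × ℝ)) 0) := by simp only [zero_mul]; exact hf
  have h := hf'.comp_hasDerivAt 0 hc
  have h2 := hasDerivAt_iff_tendsto_slope.mp h
  refine h2.congr (fun t => ?_)
  simp [slope, Function.comp, (show f (0,0) = 0 from h0), div_eq_inv_mul]

lemma fderiv_apply_tendsto (f : ℝ × ℝ → ℝ) (hf : ContDiffAt ℝ 5 f 0) (u v : ℝ) (w : ℝ × ℝ) :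
    Tendsto (fun t : ℝ => fderiv ℝ f (t*u, t*v) w) (𝓝[≠] 0) (𝓝 (fderiv ℝ f 0 w)) := by
  have hDf : ContinuousAt (fderiv ℝ f) 0 :=
    (hf.fderiv_right (m := 4) (by norm_num)).continuousAt
  have hline : Tendsto (fun t : ℝ => ((t*u, t*v) : ℝ × ℝ)) (𝓝 0) (𝓝 (0 : ℝ × ℝ)) := by
    have : ContinuousAt (fun t : ℝ => ((t*u, t*v) : ℝ × ℝ)) 0 := by fun_prop
    have h := this.tendsto; simp only [zero_mul] at h; exact h
  have h1 : Tendsto (fun t : ℝ => fderiv ℝ f (t*u, t*v)) (𝓝 0) (𝓝 (fderiv ℝ f 0)) :=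
    (hDf.tendsto).comp hline
  have h2 : Continuous (fun L : (ℝ × ℝ) →L[ℝ] ℝ => L w) :=
    (ContinuousLinearMap.apply ℝ ℝ w).continuous
  exact ((h2.tendsto _).comp h1).mono_left nhdsWithin_le_nhds

lemma cont_tendsto (f : ℝ × ℝ → ℝ) (hf : ContinuousAt f 0) (u v : ℝ) :
    Tendsto (fun t : ℝ => f (t*u, t*v)) (𝓝[≠] 0) (𝓝 (f 0)) := by
  have hline : Tendsto (fun t : ℝ => ((t*u, t*v) : ℝ × ℝ)) (𝓝 0) (𝓝 (0 : ℝ × ℝ)) := by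
    have : ContinuousAt (fun t : ℝ => ((t*u, t*v) : ℝ × ℝ)) 0 := by fun_prop
    have h := this.tendsto; simp only [zero_mul] at h; exact h
  exact (hf.tendsto.comp hline).mono_left nhdsWithin_le_nhds

lemma ev_mem (U : Set (ℝ × ℝ)) (hU : IsOpen U) (h0 : (0 : ℝ × ℝ) ∈ U) (c : ℝ → ℝ × ℝ)
    (hc : Continuous c) (hc0 : c 0 = 0) : ∀ᶠ t in 𝓝[≠] (0:ℝ), c t ∈ U := by
  have h1 : Tendsto c (𝓝 0) (𝓝 (0 : ℝ × ℝ)) := by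
    have := hc.continuousAt (x := (0:ℝ))
    rwa [ContinuousAt, hc0] at this
  exact (h1.eventually (hU.eventually_mem h0)).filter_mono nhdsWithin_le_nhds

lemma poly_tendsto (φ : ℝ → ℝ) (c : ℝ) (h : Continuous φ) (hc : φ 0 = c) :
    Tendsto φ (𝓝[≠] (0:ℝ)) (𝓝 c) :=
  hc ▸ (h.continuousAt.tendsto.mono_left nhdsWithin_le_nhds)

/-- There do not exist C⁵ functions `f, g` defined in a neighborhood of the origin in ℝ²
satisfying `λ = (fλ)_x + (gλ)_y` identically, where `λ(x,y) = x⁶ + y⁶ + x²y²`. -/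
theorem stmt_1 :
    ¬ ∃ (U : Set (ℝ × ℝ)) (f g : ℝ × ℝ → ℝ),
      IsOpen U ∧ (0, 0) ∈ U ∧
      ContDiffOn ℝ 5 f U ∧ ContDiffOn ℝ 5 g U ∧
      ∀ p ∈ U,
        fderiv ℝ (fun q => f q * lam q) p (1, 0)
          + fderiv ℝ (fun q => g q * lam q) p (0, 1) = lam p := by
  rintro ⟨U, f, g, hU, h00, hf, hg, heq⟩
  have h0 : (0 : ℝ × ℝ) ∈ U := h00
  have hf0 : ContDiffAt ℝ 5 f 0 := hf.contDiffAt (hU.mem_nhds h0)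
  have hg0 : ContDiffAt ℝ 5 g 0 := hg.contDiffAt (hU.mem_nhds h0)
  have hfd : ∀ p ∈ U, DifferentiableAt ℝ f p := fun p hp =>
    (hf.contDiffAt (hU.mem_nhds hp)).differentiableAt (by norm_num)
  have hgd : ∀ p ∈ U, DifferentiableAt ℝ g p := fun p hp =>
    (hg.contDiffAt (hU.mem_nhds hp)).differentiableAt (by norm_num)
  -- the key pointwise identity  f λ_x + λ f_x + g λ_y + λ g_y = λ
  have key : ∀ p ∈ U, f p * (6*p.1^5 + 2*p.1*p.2^2) + lam p * fderiv ℝ f p (1,0)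
      + g p * (6*p.2^5 + 2*p.1^2*p.2) + lam p * fderiv ℝ g p (0,1) = lam p := by
    intro p hp
    have hld : DifferentiableAt ℝ lam p := (lam_hasFDerivAt p).differentiableAt
    have e := heq p hp
    rw [fderiv_fun_mul (hfd p hp) hld, fderiv_fun_mul (hgd p hp) hld, (lam_hasFDerivAt p).fderiv] at e
    simp only [ContinuousLinearMap.add_apply, ContinuousLinearMap.smul_apply, smul_eq_mul,
      lamD_apply] at e
    linear_combination e
  -- abbreviations
  set a1 := fderiv ℝ f 0 (1,0) with ha1
  set b2 := fderiv ℝ g 0 (0,1) with hb2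
  -- eventual membership along the four rays
  have memA : ∀ᶠ t in 𝓝[≠] (0:ℝ), ((t, t) : ℝ × ℝ) ∈ U :=
    ev_mem U hU h0 _ (by fun_prop) (by simp)
  have memB : ∀ᶠ t in 𝓝[≠] (0:ℝ), ((t, -t) : ℝ × ℝ) ∈ U :=
    ev_mem U hU h0 _ (by fun_prop) (by simp)
  have memC : ∀ᶠ t in 𝓝[≠] (0:ℝ), ((t, 0) : ℝ × ℝ) ∈ U :=
    ev_mem U hU h0 _ (by fun_prop) (by simp)
  have memD : ∀ᶠ t in 𝓝[≠] (0:ℝ), ((0, t) : ℝ × ℝ) ∈ U :=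
    ev_mem U hU h0 _ (by fun_prop) (by simp)
  have hne : ∀ᶠ t in 𝓝[≠] (0:ℝ), t ≠ 0 := by
    filter_upwards [self_mem_nhdsWithin] with t ht using ht
  -- Step 1 : f 0 = 0 and g 0 = 0
  have E1 : ∀ᶠ t in 𝓝[≠] (0:ℝ),
      f (t, t) * (6*t^2+2) + (2*t^3+t) * fderiv ℝ f (t,t) (1,0)
        + g (t, t) * (6*t^2+2) + (2*t^3+t) * fderiv ℝ g (t,t) (0,1) = 2*t^3+t := by
    filter_upwards [memA, hne] with t htU ht
    have A := key _ htU
    simp only [lam] at A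
    have h3 : (t:ℝ)^3 ≠ 0 := pow_ne_zero _ ht
    apply mul_left_cancel₀ h3
    linear_combination A
  have E2 : ∀ᶠ t in 𝓝[≠] (0:ℝ),
      f (t, -t) * (6*t^2+2) + (2*t^3+t) * fderiv ℝ f (t,-t) (1,0)
        + g (t, -t) * (-(6*t^2)-2) + (2*t^3+t) * fderiv ℝ g (t,-t) (0,1) = 2*t^3+t := by
    filter_upwards [memB, hne] with t htU ht
    have A := key _ htU
    simp only [lam] at A
    have h3 : (t:ℝ)^3 ≠ 0 := pow_ne_zero _ ht
    apply mul_left_cancel₀ h3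
    linear_combination A
  have T1 : Tendsto (fun t : ℝ => f (t, t) * (6*t^2+2) + (2*t^3+t) * fderiv ℝ f (t,t) (1,0)
      + g (t, t) * (6*t^2+2) + (2*t^3+t) * fderiv ℝ g (t,t) (0,1)) (𝓝[≠] (0:ℝ))
      (𝓝 (f 0 * 2 + 0 * a1 + g 0 * 2 + 0 * b2)) := by
    have cf : Tendsto (fun t : ℝ => f (t, t)) (𝓝[≠] 0) (𝓝 (f 0)) := by
      simpa using cont_tendsto f hf0.continuousAt 1 1
    have cg : Tendsto (fun t : ℝ => g (t, t)) (𝓝[≠] 0) (𝓝 (g 0)) := by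
      simpa using cont_tendsto g hg0.continuousAt 1 1
    have dF : Tendsto (fun t : ℝ => fderiv ℝ f (t,t) (1,0)) (𝓝[≠] 0) (𝓝 a1) := by
      simpa using fderiv_apply_tendsto f hf0 1 1 (1,0)
    have dG : Tendsto (fun t : ℝ => fderiv ℝ g (t,t) (0,1)) (𝓝[≠] 0) (𝓝 b2) := by
      simpa using fderiv_apply_tendsto g hg0 1 1 (0,1)
    have p1 : Tendsto (fun t : ℝ => 6*t^2+2) (𝓝[≠] 0) (𝓝 2) :=
      poly_tendsto _ _ (by fun_prop) (by norm_num)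
    have p2 : Tendsto (fun t : ℝ => 2*t^3+t) (𝓝[≠] 0) (𝓝 0) :=
      poly_tendsto _ _ (by fun_prop) (by norm_num)
    exact (((cf.mul p1).add (p2.mul dF)).add (cg.mul p1)).add (p2.mul dG)
  have T2 : Tendsto (fun t : ℝ => f (t, -t) * (6*t^2+2) + (2*t^3+t) * fderiv ℝ f (t,-t) (1,0)
      + g (t, -t) * (-(6*t^2)-2) + (2*t^3+t) * fderiv ℝ g (t,-t) (0,1)) (𝓝[≠] (0:ℝ))
      (𝓝 (f 0 * 2 + 0 * a1 + g 0 * (-2) + 0 * b2)) := by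
    have cf : Tendsto (fun t : ℝ => f (t, -t)) (𝓝[≠] 0) (𝓝 (f 0)) := by
      simpa using cont_tendsto f hf0.continuousAt 1 (-1)
    have cg : Tendsto (fun t : ℝ => g (t, -t)) (𝓝[≠] 0) (𝓝 (g 0)) := by
      simpa using cont_tendsto g hg0.continuousAt 1 (-1)
    have dF : Tendsto (fun t : ℝ => fderiv ℝ f (t,-t) (1,0)) (𝓝[≠] 0) (𝓝 a1) := by
      simpa using fderiv_apply_tendsto f hf0 1 (-1) (1,0)
    have dG : Tendsto (fun t : ℝ => fderiv ℝ g (t,-t) (0,1)) (𝓝[≠] 0) (𝓝 b2) := by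
      simpa using fderiv_apply_tendsto g hg0 1 (-1) (0,1)
    have p1 : Tendsto (fun t : ℝ => 6*t^2+2) (𝓝[≠] 0) (𝓝 2) :=
      poly_tendsto _ _ (by fun_prop) (by norm_num)
    have p1' : Tendsto (fun t : ℝ => -(6*t^2)-2) (𝓝[≠] 0) (𝓝 (-2)) :=
      poly_tendsto _ _ (by fun_prop) (by norm_num)
    have p2 : Tendsto (fun t : ℝ => 2*t^3+t) (𝓝[≠] 0) (𝓝 0) :=
      poly_tendsto _ _ (by fun_prop) (by norm_num)
    exact (((cf.mul p1).add (p2.mul dF)).add (cg.mul p1')).add (p2.mul dG)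
  have p2 : Tendsto (fun t : ℝ => 2*t^3+t) (𝓝[≠] (0:ℝ)) (𝓝 0) :=
    poly_tendsto _ _ (by fun_prop) (by norm_num)
  have V1 : f 0 * 2 + 0 * a1 + g 0 * 2 + 0 * b2 = 0 :=
    tendsto_nhds_unique (T1.congr' E1) p2
  have V2 : f 0 * 2 + 0 * a1 + g 0 * (-2) + 0 * b2 = 0 :=
    tendsto_nhds_unique (T2.congr' E2) p2
  have hf00 : f 0 = 0 := by linarith
  have hg00 : g 0 = 0 := by linarith
  have hFd : HasFDerivAt f (fderiv ℝ f 0) 0 := (hfd 0 h0).hasFDerivAt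
  have hGd : HasFDerivAt g (fderiv ℝ g 0) 0 := (hgd 0 h0).hasFDerivAt
  -- Step 2 : 3 a1 + 3 b2 = 1 (after summing the two directional relations)
  have E3 : ∀ᶠ t in 𝓝[≠] (0:ℝ),
      (f (t, t) / t) * (6*t^2+2) + (2*t^2+1) * fderiv ℝ f (t,t) (1,0)
        + (g (t, t) / t) * (6*t^2+2) + (2*t^2+1) * fderiv ℝ g (t,t) (0,1) = 2*t^2+1 := by
    filter_upwards [memA, hne] with t htU ht
    have A := key _ htU
    simp only [lam] at A
    have hdf : f (t, t) / t * t = f (t, t) := div_mul_cancel₀ _ ht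
    have hdg : g (t, t) / t * t = g (t, t) := div_mul_cancel₀ _ ht
    have h4 : (t:ℝ)^4 ≠ 0 := pow_ne_zero _ ht
    apply mul_left_cancel₀ h4
    linear_combination A + (t^3*(6*t^2+2))*hdf + (t^3*(6*t^2+2))*hdg
  have E4 : ∀ᶠ t in 𝓝[≠] (0:ℝ),
      (f (t, -t) / t) * (6*t^2+2) + (2*t^2+1) * fderiv ℝ f (t,-t) (1,0)
        + (g (t, -t) / t) * (-(6*t^2)-2) + (2*t^2+1) * fderiv ℝ g (t,-t) (0,1) = 2*t^2+1 := by
    filter_upwards [memB, hne] with t htU ht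
    have A := key _ htU
    simp only [lam] at A
    have hdf : f (t, -t) / t * t = f (t, -t) := div_mul_cancel₀ _ ht
    have hdg : g (t, -t) / t * t = g (t, -t) := div_mul_cancel₀ _ ht
    have h4 : (t:ℝ)^4 ≠ 0 := pow_ne_zero _ ht
    apply mul_left_cancel₀ h4
    linear_combination A + (t^3*(6*t^2+2))*hdf + (t^3*(-(6*t^2)-2))*hdg
  have T3 : Tendsto (fun t : ℝ => (f (t, t) / t) * (6*t^2+2) + (2*t^2+1) * fderiv ℝ f (t,t) (1,0)
      + (g (t, t) / t) * (6*t^2+2) + (2*t^2+1) * fderiv ℝ g (t,t) (0,1)) (𝓝[≠] (0:ℝ))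
      (𝓝 (fderiv ℝ f 0 (1,1) * 2 + 1 * a1 + fderiv ℝ g 0 (1,1) * 2 + 1 * b2)) := by
    have sf : Tendsto (fun t : ℝ => f (t, t) / t) (𝓝[≠] 0) (𝓝 (fderiv ℝ f 0 (1,1))) := by
      simpa using slope_tendsto f _ hFd hf00 1 1
    have sg : Tendsto (fun t : ℝ => g (t, t) / t) (𝓝[≠] 0) (𝓝 (fderiv ℝ g 0 (1,1))) := by
      simpa using slope_tendsto g _ hGd hg00 1 1
    have dF : Tendsto (fun t : ℝ => fderiv ℝ f (t,t) (1,0)) (𝓝[≠] 0) (𝓝 a1) := by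
      simpa using fderiv_apply_tendsto f hf0 1 1 (1,0)
    have dG : Tendsto (fun t : ℝ => fderiv ℝ g (t,t) (0,1)) (𝓝[≠] 0) (𝓝 b2) := by
      simpa using fderiv_apply_tendsto g hg0 1 1 (0,1)
    have p1 : Tendsto (fun t : ℝ => 6*t^2+2) (𝓝[≠] 0) (𝓝 2) :=
      poly_tendsto _ _ (by fun_prop) (by norm_num)
    have p3 : Tendsto (fun t : ℝ => 2*t^2+1) (𝓝[≠] 0) (𝓝 1) :=
      poly_tendsto _ _ (by fun_prop) (by norm_num)
    exact (((sf.mul p1).add (p3.mul dF)).add (sg.mul p1)).add (p3.mul dG)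
  have T4 : Tendsto (fun t : ℝ => (f (t, -t) / t) * (6*t^2+2) + (2*t^2+1) * fderiv ℝ f (t,-t) (1,0)
      + (g (t, -t) / t) * (-(6*t^2)-2) + (2*t^2+1) * fderiv ℝ g (t,-t) (0,1)) (𝓝[≠] (0:ℝ))
      (𝓝 (fderiv ℝ f 0 (1,-1) * 2 + 1 * a1 + fderiv ℝ g 0 (1,-1) * (-2) + 1 * b2)) := by
    have sf : Tendsto (fun t : ℝ => f (t, -t) / t) (𝓝[≠] 0) (𝓝 (fderiv ℝ f 0 (1,-1))) := by
      simpa using slope_tendsto f _ hFd hf00 1 (-1)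
    have sg : Tendsto (fun t : ℝ => g (t, -t) / t) (𝓝[≠] 0) (𝓝 (fderiv ℝ g 0 (1,-1))) := by
      simpa using slope_tendsto g _ hGd hg00 1 (-1)
    have dF : Tendsto (fun t : ℝ => fderiv ℝ f (t,-t) (1,0)) (𝓝[≠] 0) (𝓝 a1) := by
      simpa using fderiv_apply_tendsto f hf0 1 (-1) (1,0)
    have dG : Tendsto (fun t : ℝ => fderiv ℝ g (t,-t) (0,1)) (𝓝[≠] 0) (𝓝 b2) := by
      simpa using fderiv_apply_tendsto g hg0 1 (-1) (0,1)
    have p1 : Tendsto (fun t : ℝ => 6*t^2+2) (𝓝[≠] 0) (𝓝 2) :=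
      poly_tendsto _ _ (by fun_prop) (by norm_num)
    have p1' : Tendsto (fun t : ℝ => -(6*t^2)-2) (𝓝[≠] 0) (𝓝 (-2)) :=
      poly_tendsto _ _ (by fun_prop) (by norm_num)
    have p3 : Tendsto (fun t : ℝ => 2*t^2+1) (𝓝[≠] 0) (𝓝 1) :=
      poly_tendsto _ _ (by fun_prop) (by norm_num)
    exact (((sf.mul p1).add (p3.mul dF)).add (sg.mul p1')).add (p3.mul dG)
  have p3 : Tendsto (fun t : ℝ => 2*t^2+1) (𝓝[≠] (0:ℝ)) (𝓝 1) :=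
    poly_tendsto _ _ (by fun_prop) (by norm_num)
  have V3 : fderiv ℝ f 0 (1,1) * 2 + 1 * a1 + fderiv ℝ g 0 (1,1) * 2 + 1 * b2 = 1 :=
    tendsto_nhds_unique (T3.congr' E3) p3
  have V4 : fderiv ℝ f 0 (1,-1) * 2 + 1 * a1 + fderiv ℝ g 0 (1,-1) * (-2) + 1 * b2 = 1 :=
    tendsto_nhds_unique (T4.congr' E4) p3
  -- Step 3 : 7 a1 + b2 = 1 and a1 + 7 b2 = 1
  have E5 : ∀ᶠ t in 𝓝[≠] (0:ℝ),
      (f (t, 0) / t) * 6 + fderiv ℝ f (t,0) (1,0) + fderiv ℝ g (t,0) (0,1) = 1 := by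
    filter_upwards [memC, hne] with t htU ht
    have A := key _ htU
    simp only [lam] at A
    have hdf : f (t, 0) / t * t = f (t, 0) := div_mul_cancel₀ _ ht
    have h6 : (t:ℝ)^6 ≠ 0 := pow_ne_zero _ ht
    apply mul_left_cancel₀ h6
    linear_combination A + (6*t^5)*hdf
  have E6 : ∀ᶠ t in 𝓝[≠] (0:ℝ),
      (g (0, t) / t) * 6 + fderiv ℝ f (0,t) (1,0) + fderiv ℝ g (0,t) (0,1) = 1 := by
    filter_upwards [memD, hne] with t htU ht
    have A := key _ htU
    simp only [lam] at A
    have hdg : g (0, t) / t * t = g (0, t) := div_mul_cancel₀ _ ht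
    have h6 : (t:ℝ)^6 ≠ 0 := pow_ne_zero _ ht
    apply mul_left_cancel₀ h6
    linear_combination A + (6*t^5)*hdg
  have T5 : Tendsto (fun t : ℝ => (f (t, 0) / t) * 6 + fderiv ℝ f (t,0) (1,0)
      + fderiv ℝ g (t,0) (0,1)) (𝓝[≠] (0:ℝ)) (𝓝 (a1 * 6 + a1 + b2)) := by
    have sf : Tendsto (fun t : ℝ => f (t, 0) / t) (𝓝[≠] 0) (𝓝 a1) := by
      simpa using slope_tendsto f _ hFd hf00 1 0
    have dF : Tendsto (fun t : ℝ => fderiv ℝ f (t,0) (1,0)) (𝓝[≠] 0) (𝓝 a1) := by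
      simpa using fderiv_apply_tendsto f hf0 1 0 (1,0)
    have dG : Tendsto (fun t : ℝ => fderiv ℝ g (t,0) (0,1)) (𝓝[≠] 0) (𝓝 b2) := by
      simpa using fderiv_apply_tendsto g hg0 1 0 (0,1)
    exact ((sf.mul tendsto_const_nhds).add dF).add dG
  have T6 : Tendsto (fun t : ℝ => (g (0, t) / t) * 6 + fderiv ℝ f (0,t) (1,0)
      + fderiv ℝ g (0,t) (0,1)) (𝓝[≠] (0:ℝ)) (𝓝 (b2 * 6 + a1 + b2)) := by
    have sg : Tendsto (fun t : ℝ => g (0, t) / t) (𝓝[≠] 0) (𝓝 b2) := by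
      simpa using slope_tendsto g _ hGd hg00 0 1
    have dF : Tendsto (fun t : ℝ => fderiv ℝ f (0,t) (1,0)) (𝓝[≠] 0) (𝓝 a1) := by
      simpa using fderiv_apply_tendsto f hf0 0 1 (1,0)
    have dG : Tendsto (fun t : ℝ => fderiv ℝ g (0,t) (0,1)) (𝓝[≠] 0) (𝓝 b2) := by
      simpa using fderiv_apply_tendsto g hg0 0 1 (0,1)
    exact ((sg.mul tendsto_const_nhds).add dF).add dG
  have pc : Tendsto (fun _ : ℝ => (1:ℝ)) (𝓝[≠] (0:ℝ)) (𝓝 1) := tendsto_const_nhds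
  have V5 : a1 * 6 + a1 + b2 = 1 := tendsto_nhds_unique (T5.congr' E5) pc
  have V6 : b2 * 6 + a1 + b2 = 1 := tendsto_nhds_unique (T6.congr' E6) pc
  -- linear contradiction
  have hfadd : fderiv ℝ f 0 (1,1) = a1 + fderiv ℝ f 0 (0,1) := by
    rw [ha1, ← ContinuousLinearMap.map_add]; norm_num
  have hfsub : fderiv ℝ f 0 (1,-1) = a1 - fderiv ℝ f 0 (0,1) := by
    rw [ha1, ← ContinuousLinearMap.map_sub]; norm_num
  have hgadd : fderiv ℝ g 0 (1,1) = fderiv ℝ g 0 (1,0) + b2 := by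
    rw [hb2, ← ContinuousLinearMap.map_add]; norm_num
  have hgsub : fderiv ℝ g 0 (1,-1) = fderiv ℝ g 0 (1,0) - b2 := by
    rw [hb2, ← ContinuousLinearMap.map_sub]; norm_num
  rw [hfadd, hgadd] at V3
  rw [hfsub, hgsub] at V4
  linarith
end

section
/- If f, g are C⁵ functions near the origin in ℝ² with λ = (fλ)_x + (gλ)_y where λ(x,y) = x⁶ + y⁶ + x²y², then f(0,0) = 0 and g(0,0) = 0. -/
open Filter Topology

lemma lam_hasFDerivAt_s2 (p : ℝ × ℝ) :
    HasFDerivAt lam ((6 * p.1 ^ 5 + 2 * p.1 * p.2 ^ 2) • ContinuousLinearMap.fst ℝ ℝ ℝ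
      + (6 * p.2 ^ 5 + 2 * p.1 ^ 2 * p.2) • ContinuousLinearMap.snd ℝ ℝ ℝ) p := by
  have hfst : HasFDerivAt (Prod.fst : ℝ × ℝ → ℝ) (ContinuousLinearMap.fst ℝ ℝ ℝ) p :=
    hasFDerivAt_fst
  have hsnd : HasFDerivAt (Prod.snd : ℝ × ℝ → ℝ) (ContinuousLinearMap.snd ℝ ℝ ℝ) p :=
    hasFDerivAt_snd
  have h1 : HasFDerivAt (fun q : ℝ × ℝ => q.1 ^ 6)
      ((6 * p.1 ^ 5) • ContinuousLinearMap.fst ℝ ℝ ℝ) p := by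
    have := (hasDerivAt_pow 6 p.1).comp_hasFDerivAt p hfst
    norm_num at this; exact this
  have h2 : HasFDerivAt (fun q : ℝ × ℝ => q.2 ^ 6)
      ((6 * p.2 ^ 5) • ContinuousLinearMap.snd ℝ ℝ ℝ) p := by
    have := (hasDerivAt_pow 6 p.2).comp_hasFDerivAt p hsnd
    norm_num at this; exact this
  have h3 : HasFDerivAt (fun q : ℝ × ℝ => q.1 ^ 2)
      ((2 * p.1) • ContinuousLinearMap.fst ℝ ℝ ℝ) p := by
    have := (hasDerivAt_pow 2 p.1).comp_hasFDerivAt p hfst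
    norm_num at this; exact this
  have h4 : HasFDerivAt (fun q : ℝ × ℝ => q.2 ^ 2)
      ((2 * p.2) • ContinuousLinearMap.snd ℝ ℝ ℝ) p := by
    have := (hasDerivAt_pow 2 p.2).comp_hasFDerivAt p hsnd
    norm_num at this; exact this
  have h5 := (h1.add h2).add (h3.mul h4)
  have heq : lam = fun q : ℝ × ℝ => q.1 ^ 6 + q.2 ^ 6 + q.1 ^ 2 * q.2 ^ 2 := rfl
  rw [heq]
  refine h5.congr_fderiv ?_
  apply ContinuousLinearMap.ext
  intro v
  simp [ContinuousLinearMap.smul_apply]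
  ring

/-- If `f, g` are C⁵ functions near the origin in ℝ² with `λ = (fλ)_x + (gλ)_y`, where
`λ(x,y) = x⁶ + y⁶ + x²y²`, then `f(0,0) = 0` and `g(0,0) = 0`. -/
theorem stmt_2 (U : Set (ℝ × ℝ)) (f g : ℝ × ℝ → ℝ)
    (hU : IsOpen U) (h0 : (0, 0) ∈ U)
    (hf : ContDiffOn ℝ 5 f U) (hg : ContDiffOn ℝ 5 g U)
    (heq : ∀ p ∈ U,
      fderiv ℝ (fun q => f q * lam q) p (1, 0)
        + fderiv ℝ (fun q => g q * lam q) p (0, 1) = lam p) :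
    f (0, 0) = 0 ∧ g (0, 0) = 0 := by
  have hfd : ∀ p ∈ U, DifferentiableAt ℝ f p := fun p hp =>
    (hf.differentiableOn (by norm_num)).differentiableAt (hU.mem_nhds hp)
  have hgd : ∀ p ∈ U, DifferentiableAt ℝ g p := fun p hp =>
    (hg.differentiableOn (by norm_num)).differentiableAt (hU.mem_nhds hp)
  have key : ∀ p ∈ U,
      lam p * fderiv ℝ f p (1, 0) + f p * (6 * p.1 ^ 5 + 2 * p.1 * p.2 ^ 2)
        + (lam p * fderiv ℝ g p (0, 1) + g p * (6 * p.2 ^ 5 + 2 * p.1 ^ 2 * p.2)) = lam p := by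
    intro p hp
    have h1 := fderiv_mul (𝕜 := ℝ) (hfd p hp) (lam_hasFDerivAt_s2 p).differentiableAt
    have h2 := fderiv_mul (𝕜 := ℝ) (hgd p hp) (lam_hasFDerivAt_s2 p).differentiableAt
    have hl := (lam_hasFDerivAt_s2 p).fderiv
    have h := heq p hp
    rw [show (fun q => f q * lam q) = f * lam from rfl,
      show (fun q => g q * lam q) = g * lam from rfl, h1, h2, hl] at h
    simp only [ContinuousLinearMap.add_apply, ContinuousLinearMap.coe_smul',
      Pi.smul_apply, ContinuousLinearMap.coe_fst', ContinuousLinearMap.coe_snd',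
      smul_eq_mul] at h
    linarith [h]
  -- continuity facts at the origin
  have hfc : ContinuousAt f ((0 : ℝ), (0 : ℝ)) := hf.continuousOn.continuousAt (hU.mem_nhds h0)
  have hgc : ContinuousAt g ((0 : ℝ), (0 : ℝ)) := hg.continuousOn.continuousAt (hU.mem_nhds h0)
  have hfdc : ContinuousAt (fun p => fderiv ℝ f p (1, 0)) ((0 : ℝ), (0 : ℝ)) := by
    have h := (hf.continuousOn_fderiv_of_isOpen hU (by norm_num)).continuousAt (hU.mem_nhds h0)
    exact (ContinuousLinearMap.apply ℝ ℝ ((1 : ℝ), (0 : ℝ))).continuous.continuousAt.comp h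
  have hgdc : ContinuousAt (fun p => fderiv ℝ g p (0, 1)) ((0 : ℝ), (0 : ℝ)) := by
    have h := (hg.continuousOn_fderiv_of_isOpen hU (by norm_num)).continuousAt (hU.mem_nhds h0)
    exact (ContinuousLinearMap.apply ℝ ℝ ((0 : ℝ), (1 : ℝ))).continuous.continuousAt.comp h
  have main : ∀ e : ℝ, e = 1 ∨ e = -1 → f (0, 0) + e * g (0, 0) = 0 := by
    intro e he
    set γ : ℝ → ℝ × ℝ := fun t => (t, e * t) with hγ
    have hγc : ContinuousAt γ 0 := by fun_prop
    have hγ0 : γ 0 = ((0 : ℝ), (0 : ℝ)) := by simp [hγ]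
    set H : ℝ → ℝ := fun t =>
      (2 * t ^ 3 + t) * fderiv ℝ f (γ t) (1, 0) + f (γ t) * (6 * t ^ 2 + 2)
        + ((2 * t ^ 3 + t) * fderiv ℝ g (γ t) (0, 1) + g (γ t) * (e * (6 * t ^ 2 + 2)))
        - (2 * t ^ 3 + t) with hH
    have hUt : ∀ᶠ t in 𝓝 (0 : ℝ), γ t ∈ U := by
      have := hγc (hγ0 ▸ hU.mem_nhds h0)
      exact this
    have hH0 : ∀ᶠ t in 𝓝[≠] (0 : ℝ), H t = 0 := by
      filter_upwards [hUt.filter_mono nhdsWithin_le_nhds, self_mem_nhdsWithin] with t ht ht0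
      have hk := key (γ t) ht
      have ht3 : (t : ℝ) ^ 3 ≠ 0 := pow_ne_zero _ ht0
      have h2 : H t * t ^ 3 = 0 := by
        simp only [hH, hγ, lam] at hk ⊢
        rcases he with he | he <;> subst he <;> linear_combination hk
      exact (mul_eq_zero.mp h2).resolve_right ht3
    have hHc : ContinuousAt H 0 := by
      have c1 : ContinuousAt (fun t : ℝ => fderiv ℝ f (γ t) (1, 0)) 0 := by
        exact (hγ0 ▸ hfdc).comp hγc
      have c2 : ContinuousAt (fun t : ℝ => fderiv ℝ g (γ t) (0, 1)) 0 := by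
        exact (hγ0 ▸ hgdc).comp hγc
      have c3 : ContinuousAt (fun t : ℝ => f (γ t)) 0 := (hγ0 ▸ hfc).comp hγc
      have c4 : ContinuousAt (fun t : ℝ => g (γ t)) 0 := (hγ0 ▸ hgc).comp hγc
      rw [hH]
      have cp : ContinuousAt (fun t : ℝ => 2 * t ^ 3 + t) 0 := by fun_prop
      have cq : ContinuousAt (fun t : ℝ => 6 * t ^ 2 + 2) 0 := by fun_prop
      have cr : ContinuousAt (fun t : ℝ => e * (6 * t ^ 2 + 2)) 0 := by fun_prop
      exact (((cp.mul c1).add (c3.mul cq)).add ((cp.mul c2).add (c4.mul cr))).sub cp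
    have t1 : Filter.Tendsto H (𝓝[≠] (0 : ℝ)) (𝓝 (H 0)) :=
      hHc.tendsto.mono_left nhdsWithin_le_nhds
    have t2 : Filter.Tendsto H (𝓝[≠] (0 : ℝ)) (𝓝 0) :=
      Filter.Tendsto.congr' (Filter.EventuallyEq.symm hH0) tendsto_const_nhds
    have hH00 : H 0 = 0 := tendsto_nhds_unique t1 t2
    have : H 0 = 2 * f (0, 0) + e * (2 * g (0, 0)) := by
      simp only [hH, hγ0]
      norm_num
      ring
    rw [this] at hH00
    linarith
  have h1 := main 1 (Or.inl rfl)
  have h2 := main (-1) (Or.inr rfl)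
  constructor <;> linarith
end
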